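/- arXiv:1607.05517 — 7 statements merged into one kernel-verified Lean document; each statement's English description precedes it below -/
import Mathlib

section
/- For any n ≥ 2, we have 1/a_n = 1 + ∑_{k=2}^{n} 1/(k - a_{k-1}). -/
open Filter Topology Finset Real

theorem stmt3 (a : ℕ → ℝ) (ha1 : a 1 = 1)
    (harec : ∀ n, 2 ≤ n → a n = a (n - 1) * (1 - a (n - 1) / n)) :
    ∀ n, 2 ≤ n → 1 / a n = 1 + ∑ k ∈ Finset.Icc 2 n, 1 / ((k : ℝ) - a (k - 1)) := by
  have hpos : ∀ n, 1 ≤ n → 0 < a n ∧ a n ≤ 1 := by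
    intro n hn
    induction n with
    | zero => omega
    | succ m ih =>
      rcases Nat.lt_or_ge m 1 with h | h
      · interval_cases m
        simp [ha1]
      · obtain ⟨h1, h2⟩ := ih h
        have h2n : 2 ≤ m + 1 := by omega
        have hrec := harec (m + 1) h2n
        simp only [Nat.add_sub_cancel] at hrec
        have hm1 : (1 : ℝ) ≤ (m + 1 : ℕ) := by exact_mod_cast Nat.one_le_iff_ne_zero.mpr (by omega)
        have hmpos : (0 : ℝ) < (m + 1 : ℕ) := by positivity
        have hdiv : a m / (m + 1 : ℕ) < 1 := by
          rw [div_lt_one hmpos]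
          have hm : (1:ℝ) ≤ (m:ℕ) := by exact_mod_cast h
          push_cast
          push_cast at hm
          linarith
        have hdivpos : 0 ≤ a m / (m + 1 : ℕ) := by positivity
        constructor
        · rw [hrec]
          have : (0:ℝ) < 1 - a m / (m + 1 : ℕ) := by linarith
          push_cast at hrec this ⊢
          nlinarith
        · rw [hrec]
          have : (0:ℝ) < 1 - a m / (m + 1 : ℕ) := by linarith
          nlinarith
  intro n hn
  induction n, hn using Nat.le_induction with
  | base =>
    have h2 := harec 2 le_rfl
    norm_num [ha1] at h2
    norm_num [h2, ha1]
  | succ n hn ih =>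
    rw [Finset.sum_Icc_succ_top (by omega : 2 ≤ n + 1), ← add_assoc, ← ih]
    have h1 : 0 < a n := (hpos n (by omega)).1
    have h2 : a n ≤ 1 := (hpos n (by omega)).2
    have hrec := harec (n + 1) (by omega)
    simp only [Nat.add_sub_cancel] at hrec
    have hc : (2:ℝ) ≤ (n:ℕ) := by exact_mod_cast hn
    have hlt : a n < ((n + 1 : ℕ) : ℝ) := by push_cast at hc ⊢; linarith
    have hne : ((n + 1 : ℕ) : ℝ) - a n ≠ 0 := by linarith
    have hpos' : (0:ℝ) < ((n+1:ℕ):ℝ) := by positivity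
    simp only [Nat.add_sub_cancel]
    rw [hrec]
    push_cast at hlt hne hpos' ⊢
    rw [div_add_div _ _ (ne_of_gt h1) hne]
    rw [eq_div_iff (by positivity : a n * ((n:ℝ) + 1 - a n) ≠ 0)]
    have hf : (1 : ℝ) - a n / ((n:ℝ) + 1) = (((n:ℝ) + 1) - a n) / ((n:ℝ) + 1) := by
      field_simp
    rw [hf]
    field_simp
    ring
end

section
/- The series ∑_{k=2}^{∞} a_{k-1}/(k(k - a_{k-1})) converges. -/
set_option maxHeartbeats 1000000


open Filter Topology Finset Real

theorem stmt4 (a : ℕ → ℝ) (ha1 : a 1 = 1)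
    (harec : ∀ n, 2 ≤ n → a n = a (n - 1) * (1 - a (n - 1) / n)) :
    Summable (fun k : ℕ => a (k + 1) / ((k + 2 : ℝ) * ((k + 2 : ℝ) - a (k + 1)))) := by
  have key : ∀ n, 1 ≤ n → 0 < a n ∧ a n ≤ 1 := by
    intro n hn
    induction n, hn using Nat.le_induction with
    | base => simp [ha1]
    | succ n hn ih =>
      have h2 : 2 ≤ n + 1 := by omega
      have hrec := harec (n + 1) h2
      simp only [Nat.add_sub_cancel] at hrec
      have hnpos : (0:ℝ) < (n:ℝ) + 1 := by positivity
      have hfrac : a n / ((n:ℝ) + 1) < 1 := by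
        rw [div_lt_one hnpos]
        have : (1:ℝ) ≤ (n:ℝ) := by exact_mod_cast hn
        linarith [ih.2]
      have hfrac0 : 0 ≤ a n / ((n:ℝ) + 1) := div_nonneg ih.1.le hnpos.le
      have : ((n+1:ℕ):ℝ) = (n:ℝ) + 1 := by push_cast; ring
      rw [hrec, this]
      constructor
      · have := ih.1; nlinarith
      · nlinarith [ih.1, ih.2]
  apply Summable.of_nonneg_of_le (f := fun k : ℕ => 1 / ((k:ℝ) + 1) ^ 2)
  · intro k
    obtain ⟨h1, h2⟩ := key (k + 1) (by omega)
    have hd : (0:ℝ) < ((k:ℝ) + 2) * (((k:ℝ) + 2) - a (k + 1)) := by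
      apply mul_pos (by positivity); linarith
    positivity
  · intro k
    obtain ⟨h1, h2⟩ := key (k + 1) (by omega)
    have hd : ((k:ℝ) + 1) ^ 2 ≤ ((k:ℝ) + 2) * (((k:ℝ) + 2) - a (k + 1)) := by nlinarith
    exact div_le_div₀ zero_le_one h2 (by positivity) hd
  · have := Real.summable_one_div_nat_pow.mpr (show 1 < 2 by norm_num)
    have h := (summable_nat_add_iff 1).mpr this
    simpa using h
end

section
/- The sequence b_n = 1/a_n - log n converges, and its limit equals γ + S, where S = ∑_{k=2}^{∞} a_{k-1}/(k(k - a_{k-1})) and γ is the Euler–Mascheroni constant. -/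
open Filter Topology Finset Real

theorem stmt7 (a : ℕ → ℝ) (ha1 : a 1 = 1)
    (harec : ∀ n, 2 ≤ n → a n = a (n - 1) * (1 - a (n - 1) / n)) :
    Filter.Tendsto (fun n : ℕ => 1 / a n - Real.log n) Filter.atTop
      (𝓝 (Real.eulerMascheroniConstant +
        ∑' k : ℕ, a (k + 1) / ((k + 2 : ℝ) * ((k + 2 : ℝ) - a (k + 1))))) := by
  -- bounds on a
  have hb : ∀ n : ℕ, 0 < a (n + 1) ∧ a (n + 1) ≤ 1 := by
    intro n
    induction n with
    | zero => simp [ha1]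
    | succ m ih =>
      obtain ⟨h0, h1⟩ := ih
      have hrec := harec (m + 2) (by omega)
      simp only [Nat.add_sub_cancel, show m + 2 - 1 = m + 1 by omega] at hrec
      have hcast : ((m + 2 : ℕ) : ℝ) = (m : ℝ) + 2 := by push_cast; ring
      rw [hrec, hcast]
      have hm2 : (0:ℝ) < (m : ℝ) + 2 := by positivity
      have hlt : a (m + 1) / ((m : ℝ) + 2) < 1 := by
        rw [div_lt_one hm2]; linarith
      have hf0 : 0 < 1 - a (m + 1) / ((m : ℝ) + 2) := by linarith
      constructor
      · positivity
      · have hfle : 1 - a (m + 1) / ((m : ℝ) + 2) ≤ 1 := by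
          have : 0 ≤ a (m + 1) / ((m : ℝ) + 2) := by positivity
          linarith
        calc a (m + 1) * (1 - a (m + 1) / ((m:ℝ) + 2)) ≤ a (m + 1) * 1 := by
              exact mul_le_mul_of_nonneg_left hfle h0.le
          _ ≤ 1 := by simpa using h1
  set f : ℕ → ℝ := fun k => a (k + 1) / ((k + 2 : ℝ) * ((k + 2 : ℝ) - a (k + 1))) with hf
  -- key identity
  have hkey : ∀ n : ℕ, 1 / a (n + 1) = (harmonic (n + 1) : ℝ) + ∑ i ∈ range n, f i := by
    intro n
    induction n with
    | zero => simp [ha1, harmonic]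
    | succ m ih =>
      obtain ⟨h0, h1⟩ := hb m
      have hrec := harec (m + 2) (by omega)
      simp only [Nat.add_sub_cancel, show m + 2 - 1 = m + 1 by omega] at hrec
      have hcast : ((m + 2 : ℕ) : ℝ) = (m : ℝ) + 2 := by push_cast; ring
      rw [hcast] at hrec
      have hm2 : (0:ℝ) < (m : ℝ) + 2 := by positivity
      have hsub : (0:ℝ) < (m : ℝ) + 2 - a (m + 1) := by linarith
      have hstep : 1 / a (m + 2) = 1 / a (m + 1) + 1 / ((m : ℝ) + 2) + f m := by
        rw [hrec, hf]
        simp only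
        have : ((m : ℕ) : ℝ) + 2 = (m : ℝ) + 2 := by norm_num
        rw [this]
        field_simp
        ring
      rw [show m + 1 + 1 = m + 2 from rfl, hstep, ih, Finset.sum_range_succ,
        harmonic_succ (m + 1)]
      push_cast
      ring
  -- summability
  have hfle : ∀ k : ℕ, f k ≤ 1 / ((k + 1 : ℝ) * (k + 2 : ℝ)) := by
    intro k
    obtain ⟨h0, h1⟩ := hb k
    have hsub : (k + 1 : ℝ) ≤ (k + 2 : ℝ) - a (k + 1) := by linarith
    have hk1 : (0:ℝ) < (k + 1 : ℝ) := by positivity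
    have hk2 : (0:ℝ) < (k + 2 : ℝ) := by positivity
    have hd : (0:ℝ) < (k + 2 : ℝ) * ((k + 2 : ℝ) - a (k + 1)) := by nlinarith
    rw [hf]
    simp only
    rw [div_le_div_iff₀ hd (by positivity)]
    nlinarith [mul_le_mul h1 hsub (by positivity) zero_le_one]
  have hfnn : ∀ k : ℕ, 0 ≤ f k := by
    intro k
    obtain ⟨h0, h1⟩ := hb k
    have hsub : (0:ℝ) < (k + 2 : ℝ) - a (k + 1) := by linarith
    have : (0:ℝ) < (k + 2 : ℝ) := by positivity
    positivity
  have hsummax : Summable (fun k : ℕ => 1 / ((k + 1 : ℝ) * (k + 2 : ℝ))) := by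
    apply Summable.of_nonneg_of_le (fun k => by positivity)
      (fun k => ?_) ((summable_nat_add_iff 1).mpr (Real.summable_one_div_nat_pow.mpr one_lt_two))
    have hk1 : (0:ℝ) < (k + 1 : ℝ) := by positivity
    rw [div_le_div_iff₀ (by positivity) (by positivity)]
    push_cast
    nlinarith
  have hsum : Summable f := Summable.of_nonneg_of_le hfnn hfle hsummax
  have htsum : Tendsto (fun n : ℕ => ∑ i ∈ range n, f i) atTop (𝓝 (∑' k, f k)) :=
    hsum.hasSum.tendsto_sum_nat
  -- combine
  have hmain : Tendsto (fun n : ℕ => ((harmonic n : ℝ) - Real.log n) + ∑ i ∈ range (n - 1), f i)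
      atTop (𝓝 (Real.eulerMascheroniConstant + ∑' k, f k)) := by
    apply Tendsto.add Real.tendsto_harmonic_sub_log
    exact htsum.comp (tendsto_sub_atTop_nat 1)
  apply hmain.congr'
  filter_upwards [eventually_ge_atTop 1] with n hn
  obtain ⟨m, rfl⟩ := Nat.exists_eq_add_of_le hn
  rw [show 1 + m = m + 1 by ring, hkey m]
  simp only [Nat.add_sub_cancel]
  ring
end

section
/- The limit as n → ∞ of (1/a_n)/log n equals 1, i.e., 1/a_n is asymptotic to log n. -/
open Filter Topology Finset Real

private lemma aux_pos (a : ℕ → ℝ) (ha1 : a 1 = 1)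
    (harec : ∀ n, 2 ≤ n → a n = a (n - 1) * (1 - a (n - 1) / n)) :
    ∀ n, 1 ≤ n → 0 < a n ∧ a n ≤ 1 := by
  intro n hn
  induction n, hn using Nat.le_induction with
  | base => simp [ha1]
  | succ n hn ih =>
    have hrec := harec (n + 1) (by omega)
    simp only [Nat.add_sub_cancel] at hrec
    obtain ⟨h0, h1⟩ := ih
    have hn1 : (0:ℝ) < (n:ℝ) + 1 := by positivity
    have hlt : a n / ((n:ℕ)+1 : ℝ) < 1 := by
      rw [div_lt_one hn1]
      have : (1:ℝ) ≤ (n:ℝ) := by exact_mod_cast hn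
      linarith
    have hfrac : 0 < 1 - a n / ((n:ℕ)+1 : ℝ) := by
      push_cast at hlt ⊢; linarith
    constructor
    · rw [hrec]; push_cast; positivity
    · rw [hrec]
      have h2 : (1 : ℝ) - a n / ((n:ℕ)+1 : ℝ) ≤ 1 := by
        have : 0 ≤ a n / ((n:ℕ)+1 : ℝ) := by positivity
        linarith
      push_cast at h2 hfrac ⊢
      nlinarith

private lemma aux_step (a : ℕ → ℝ) (ha1 : a 1 = 1)
    (harec : ∀ n, 2 ≤ n → a n = a (n - 1) * (1 - a (n - 1) / n)) :
    ∀ n, 1 ≤ n → 1 / a (n + 1) = 1 / a n + 1 / (((n:ℝ) + 1) - a n) := by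
  intro n hn
  have hrec := harec (n + 1) (by omega)
  simp only [Nat.add_sub_cancel] at hrec
  obtain ⟨h0, h1⟩ := aux_pos a ha1 harec n hn
  have hn1 : (1:ℝ) ≤ (n:ℝ) := by exact_mod_cast hn
  have hden : (0:ℝ) < ((n:ℝ) + 1) - a n := by linarith
  rw [hrec]
  push_cast
  field_simp
  ring

private lemma aux_lower (a : ℕ → ℝ) (ha1 : a 1 = 1)
    (harec : ∀ n, 2 ≤ n → a n = a (n - 1) * (1 - a (n - 1) / n)) :
    ∀ n : ℕ, 1 ≤ n → 1 - Real.log 2 + Real.log ((n:ℝ) + 1) ≤ 1 / a n := by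
  intro n hn
  induction n, hn using Nat.le_induction with
  | base => simp [ha1]; norm_num
  | succ n hn ih =>
    rw [aux_step a ha1 harec n hn]
    obtain ⟨h0, h1⟩ := aux_pos a ha1 harec n hn
    have hn1 : (1:ℝ) ≤ (n:ℝ) := by exact_mod_cast hn
    -- log (n+2) - log (n+1) ≤ 1/(n+1)
    have hlog : Real.log ((n:ℝ) + 2) - Real.log ((n:ℝ) + 1) ≤ 1 / ((n:ℝ) + 1) := by
      have h := Real.log_le_sub_one_of_pos (show (0:ℝ) < ((n:ℝ)+2)/((n:ℝ)+1) by positivity)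
      rw [Real.log_div (by positivity) (by positivity)] at h
      have : ((n:ℝ)+2)/((n:ℝ)+1) - 1 = 1/((n:ℝ)+1) := by field_simp; ring
      linarith
    have hterm : 1 / ((n:ℝ) + 1) ≤ 1 / (((n:ℝ) + 1) - a n) := by
      apply one_div_le_one_div_of_le
      · linarith
      · linarith
    have hco : Real.log ((n:ℝ) + 1 + 1) = Real.log ((n:ℝ) + 2) := by ring_nf
    push_cast
    push_cast at ih
    linarith

private lemma aux_upper (a : ℕ → ℝ) (ha1 : a 1 = 1)
    (harec : ∀ n, 2 ≤ n → a n = a (n - 1) * (1 - a (n - 1) / n)) :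
    ∀ n : ℕ, 1 ≤ n → 1 / a (n + 1) ≤ 2 + Real.log (n:ℝ) := by
  intro n hn
  induction n, hn using Nat.le_induction with
  | base =>
    rw [aux_step a ha1 harec 1 le_rfl, ha1]
    norm_num
  | succ n hn ih =>
    rw [aux_step a ha1 harec (n+1) (by omega)]
    obtain ⟨h0, h1⟩ := aux_pos a ha1 harec (n+1) (by omega)
    have hn1 : (1:ℝ) ≤ (n:ℝ) := by exact_mod_cast hn
    -- 1/(n+1) ≤ log (n+1) - log n
    have hlog : 1 / ((n:ℝ) + 1) ≤ Real.log ((n:ℝ) + 1) - Real.log (n:ℝ) := by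
      have h := Real.log_le_sub_one_of_pos (show (0:ℝ) < (n:ℝ)/((n:ℝ)+1) by positivity)
      rw [Real.log_div (by positivity) (by positivity)] at h
      have : (n:ℝ)/((n:ℝ)+1) - 1 = -(1/((n:ℝ)+1)) := by field_simp; ring
      linarith
    have hterm : 1 / (((n:ℝ) + 1 + 1) - a (n+1)) ≤ 1 / ((n:ℝ) + 1) := by
      apply one_div_le_one_div_of_le
      · linarith
      · linarith
    push_cast
    push_cast at hterm
    linarith

theorem stmt8 (a : ℕ → ℝ) (ha1 : a 1 = 1)
    (harec : ∀ n, 2 ≤ n → a n = a (n - 1) * (1 - a (n - 1) / n)) :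
    Filter.Tendsto (fun n : ℕ => (1 / a n) / Real.log n) Filter.atTop (𝓝 1) := by
  have hloginf : Tendsto (fun n : ℕ => Real.log n) atTop atTop :=
    Real.tendsto_log_atTop.comp tendsto_natCast_atTop_atTop
  have hupper : Tendsto (fun n : ℕ => 1 + 2 / Real.log n) atTop (𝓝 1) := by
    have h0 : Tendsto (fun n : ℕ => 2 / Real.log n) atTop (𝓝 0) := by
      simpa using Tendsto.div_atTop (tendsto_const_nhds (x := (2:ℝ))) hloginf
    simpa using tendsto_const_nhds.add h0
  apply tendsto_of_tendsto_of_tendsto_of_le_of_le' (tendsto_const_nhds (x := (1:ℝ))) hupper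
  · -- eventually 1 ≤ (1/a n)/log n
    filter_upwards [eventually_ge_atTop 2] with n hn
    have hn1 : (1:ℕ) ≤ n := by omega
    have hlogpos : 0 < Real.log n := by
      apply Real.log_pos
      exact_mod_cast by omega
    have hlow := aux_lower a ha1 harec n hn1
    have hlog2 : Real.log 2 < 1 := by
      have := Real.log_two_lt_d9; linarith
    have hmono : Real.log (n:ℝ) ≤ Real.log ((n:ℝ) + 1) := by
      apply Real.log_le_log (by positivity); linarith
    have : Real.log (n:ℝ) ≤ 1 / a n := by push_cast at hlow; linarith
    rw [le_div_iff₀ hlogpos]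
    linarith
  · -- eventually (1/a n)/log n ≤ 1 + 2/log n
    filter_upwards [eventually_ge_atTop 2] with n hn
    have hlogpos : 0 < Real.log n := by
      apply Real.log_pos
      exact_mod_cast by omega
    obtain ⟨m, rfl⟩ : ∃ m, n = m + 1 := ⟨n - 1, by omega⟩
    have hm1 : (1:ℕ) ≤ m := by omega
    have hup := aux_upper a ha1 harec m hm1
    have hmono : Real.log (m:ℝ) ≤ Real.log ((m:ℝ) + 1) := by
      apply Real.log_le_log
      · exact_mod_cast by positivity
      · linarith
    have hle : 1 / a (m+1) ≤ 2 + Real.log ((m:ℝ)+1) := by linarith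
    rw [div_le_iff₀ hlogpos]
    push_cast at hle hlogpos ⊢
    have : (1 + 2 / Real.log ((m:ℝ)+1)) * Real.log ((m:ℝ)+1) = Real.log ((m:ℝ)+1) + 2 := by
      field_simp
    linarith [this]
end

section
/- The partial sums c(n) = ∑_{k=1}^{n} a_k satisfy c(n)/π(n) → 1 as n → ∞, where π is the prime counting function. -/
open Filter Topology Finset Real

private lemma key_bounds (a : ℕ → ℝ) (ha1 : a 1 = 1)
    (harec : ∀ n, 2 ≤ n → a n = a (n - 1) * (1 - a (n - 1) / n)) :
    ∀ n, 1 ≤ n → 0 < a n ∧ a n ≤ 1 ∧ (harmonic n : ℝ) ≤ (a n)⁻¹ ∧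
      (a n)⁻¹ ≤ (harmonic (n - 1) : ℝ) + 1 := by
  intro n hn
  induction n with
  | zero => omega
  | succ n ih =>
    rcases n with _ | m
    · norm_num [ha1, harmonic_succ]
    obtain ⟨hA, hA1, hlow, hup⟩ := ih (by omega)
    simp only [Nat.add_sub_cancel] at hup ⊢
    have hrec := harec (m + 2) (by omega)
    rw [show m + 2 - 1 = m + 1 by omega] at hrec
    push_cast at hrec
    set A := a (m + 1) with hAdef
    set M : ℝ := (m : ℝ) + 2 with hMdef
    have hM2 : (2 : ℝ) ≤ M := by simp [hMdef]
    have hMA : (1 : ℝ) ≤ M - A := by linarith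
    have hfac : 0 < 1 - A / M := by
      have : A / M < 1 := by
        rw [div_lt_one (by linarith)]; linarith
      linarith
    have hrec' : a (m + 1 + 1) = A * (1 - A / M) := by
      exact hrec
    have hpos : 0 < a (m + 1 + 1) := by rw [hrec']; positivity
    have hle1 : a (m + 1 + 1) ≤ 1 := by
      rw [hrec']
      have h1 : 1 - A / M ≤ 1 := by
        have : 0 ≤ A / M := by positivity
        linarith
      calc A * (1 - A / M) ≤ A * 1 := by
            exact mul_le_mul_of_nonneg_left h1 hA.le
        _ ≤ 1 := by linarith
    have hinv : (a (m + 1 + 1))⁻¹ = A⁻¹ + (M - A)⁻¹ := by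
      rw [hrec']
      have hMne : M ≠ 0 := by linarith
      have hMAne : M - A ≠ 0 := by linarith
      have hfacne : 1 - A / M ≠ 0 := hfac.ne'
      field_simp
      ring
    refine ⟨hpos, hle1, ?_, ?_⟩
    · have hcast : (harmonic (m + 1 + 1) : ℝ) = (harmonic (m + 1) : ℝ) + M⁻¹ := by
        rw [harmonic_succ]; push_cast; rw [hMdef]; ring
      rw [hinv, hcast]
      have : M⁻¹ ≤ (M - A)⁻¹ := by
        apply inv_anti₀ (by linarith) (by linarith)
      linarith
    · rw [hinv]
      have h1 : (M - A)⁻¹ ≤ ((m : ℝ) + 1)⁻¹ := by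
        apply inv_anti₀ (by positivity) (by rw [hMdef]; linarith)
      have h2 : (harmonic (m + 1) : ℝ) = (harmonic m : ℝ) + ((m : ℝ) + 1)⁻¹ := by
        rw [harmonic_succ]; push_cast; ring
      rw [h2]
      linarith

private lemma abound (a : ℕ → ℝ) (ha1 : a 1 = 1)
    (harec : ∀ n, 2 ≤ n → a n = a (n - 1) * (1 - a (n - 1) / n)) :
    ∀ k, 2 ≤ k → |a k - (Real.log k)⁻¹| ≤ 2 / (Real.log k) ^ 2 := by
  intro k hk
  obtain ⟨hpos, _, hlow, hup⟩ := key_bounds a ha1 harec k (by omega)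
  set L := Real.log k with hLdef
  have hk1 : (1 : ℝ) < (k : ℝ) := by exact_mod_cast (by omega : 1 < k)
  have hL : 0 < L := Real.log_pos hk1
  have h1 : L ≤ (a k)⁻¹ := by
    calc L ≤ Real.log ((k : ℝ) + 1) := by
          apply Real.log_le_log (by linarith); linarith
      _ ≤ (harmonic k : ℝ) := by
          have := log_add_one_le_harmonic k
          push_cast at this ⊢
          convert this using 2
      _ ≤ (a k)⁻¹ := hlow
  have h2 : (a k)⁻¹ ≤ L + 2 := by
    calc (a k)⁻¹ ≤ (harmonic (k - 1) : ℝ) + 1 := hup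
      _ ≤ (1 + Real.log (k - 1 : ℕ)) + 1 := by
          have := harmonic_le_one_add_log (k - 1)
          linarith
      _ ≤ L + 2 := by
          have hmono : Real.log (k - 1 : ℕ) ≤ L := by
            apply Real.log_le_log
            · have : (1 : ℕ) ≤ k - 1 := by omega
              exact_mod_cast Nat.lt_of_lt_of_le Nat.zero_lt_one this
            · exact_mod_cast Nat.sub_le k 1
          linarith
  -- from h1 : a k ≤ L⁻¹ ; from h2 : (L+2)⁻¹ ≤ a k
  have h3 : a k ≤ L⁻¹ := by
    rw [inv_eq_one_div, le_div_iff₀ hL]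
    calc a k * L ≤ a k * (a k)⁻¹ := mul_le_mul_of_nonneg_left h1 hpos.le
      _ = 1 := mul_inv_cancel₀ hpos.ne'
  have h4 : (L + 2)⁻¹ ≤ a k := by
    rw [inv_eq_one_div, div_le_iff₀ (by linarith : (0:ℝ) < L + 2)]
    calc 1 = a k * (a k)⁻¹ := (mul_inv_cancel₀ hpos.ne').symm
      _ ≤ a k * (L + 2) := mul_le_mul_of_nonneg_left h2 hpos.le
  rw [abs_sub_comm, abs_of_nonneg (by linarith : 0 ≤ L⁻¹ - a k)]
  have e1 : L⁻¹ - (L + 2)⁻¹ = 2 / (L * (L + 2)) := by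
    field_simp
    ring
  have e2 : 2 / (L * (L + 2)) ≤ 2 / L ^ 2 := by
    apply div_le_div_of_nonneg_left (by norm_num) (by positivity)
    nlinarith
  linarith

theorem stmt11 (a : ℕ → ℝ) (ha1 : a 1 = 1)
    (harec : ∀ n, 2 ≤ n → a n = a (n - 1) * (1 - a (n - 1) / n))
    (hPNT : Filter.Tendsto (fun n : ℕ =>
      (Nat.primeCounting n : ℝ) / ∑ k ∈ Finset.Icc 2 n, 1 / Real.log k)
      Filter.atTop (𝓝 1)) :
    Filter.Tendsto (fun n : ℕ =>
      (∑ k ∈ Finset.Icc 1 n, a k) / (Nat.primeCounting n : ℝ))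
      Filter.atTop (𝓝 1) := by
  have habs := abound a ha1 harec
  set g : ℕ → ℝ := fun k => if 2 ≤ k then (Real.log k)⁻¹ else 0 with hgdef
  set f : ℕ → ℝ := fun k => if 1 ≤ k then a k else 0 with hfdef
  have hg0 : ∀ k, 0 ≤ g k := by
    intro k
    simp only [hgdef]
    split
    · rename_i hk
      have : (1 : ℝ) < (k : ℝ) := by exact_mod_cast (by omega : 1 < k)
      exact (inv_pos.2 (Real.log_pos this)).le
    · exact le_rfl
  have hSg : ∀ n : ℕ, ∑ k ∈ Finset.Icc 2 n, 1 / Real.log k = ∑ k ∈ Finset.range (n+1), g k := by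
    intro n
    rw [show ∑ k ∈ Finset.Icc 2 n, 1 / Real.log k = ∑ k ∈ Finset.Icc 2 n, g k from
      Finset.sum_congr rfl fun k hk => by
        simp only [hgdef, if_pos (Finset.mem_Icc.1 hk).1, one_div]]
    apply Finset.sum_subset
    · intro k hk
      rw [Finset.mem_Icc] at hk
      rw [Finset.mem_range]
      omega
    · intro k hk hk2
      rw [Finset.mem_range] at hk
      rw [Finset.mem_Icc] at hk2
      simp only [hgdef]
      rw [if_neg (by omega)]
  have hCf : ∀ n : ℕ, ∑ k ∈ Finset.Icc 1 n, a k = ∑ k ∈ Finset.range (n+1), f k := by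
    intro n
    rw [show ∑ k ∈ Finset.Icc 1 n, a k = ∑ k ∈ Finset.Icc 1 n, f k from
      Finset.sum_congr rfl fun k hk => by
        simp only [hfdef, if_pos (Finset.mem_Icc.1 hk).1]]
    apply Finset.sum_subset
    · intro k hk
      rw [Finset.mem_Icc] at hk
      rw [Finset.mem_range]
      omega
    · intro k hk hk2
      rw [Finset.mem_range] at hk
      rw [Finset.mem_Icc] at hk2
      simp only [hfdef]
      rw [if_neg (by omega)]
  have hdvg : Tendsto (fun n => ∑ k ∈ Finset.range n, g k) atTop atTop := by
    rw [← not_summable_iff_tendsto_nat_atTop_of_nonneg hg0]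
    intro hsum
    have h2 : Summable (fun k : ℕ => g (k + 2)) := (summable_nat_add_iff 2).2 hsum
    have h3 : Summable (fun k : ℕ => (((k : ℕ) + 2 : ℕ) : ℝ)⁻¹) := by
      apply h2.of_nonneg_of_le (fun k => by positivity)
      intro k
      simp only [hgdef, if_pos (by omega : 2 ≤ k + 2)]
      apply inv_anti₀
      · apply Real.log_pos
        exact_mod_cast (by omega : 1 < k + 2)
      · exact Real.log_le_self (by positivity)
    have h4 : Summable (fun k : ℕ => ((k : ℕ) : ℝ)⁻¹) := (summable_nat_add_iff 2).1 h3
    exact not_summable_natCast_inv h4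
  have hlo : (fun k => f k - g k) =o[atTop] g := by
    rw [Asymptotics.isLittleO_iff]
    intro ε hε
    have hlog : Tendsto (fun k : ℕ => Real.log k) atTop atTop :=
      Real.tendsto_log_atTop.comp tendsto_natCast_atTop_atTop
    filter_upwards [hlog.eventually_ge_atTop (2 / ε), eventually_ge_atTop 2] with k hk1 hk2
    have hk1' : (1 : ℝ) < (k : ℝ) := by exact_mod_cast (by omega : 1 < k)
    have hL : 0 < Real.log k := Real.log_pos hk1'
    simp only [hfdef, hgdef, if_pos (show 1 ≤ k by omega), if_pos hk2]
    rw [Real.norm_eq_abs, Real.norm_eq_abs, abs_of_pos (inv_pos.2 hL)]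
    refine (habs k hk2).trans ?_
    have h2L : 2 ≤ Real.log k * ε := (div_le_iff₀ hε).1 hk1
    have he : ε * (Real.log k)⁻¹ = ε / Real.log k := by rw [div_eq_mul_inv]
    rw [he, div_le_div_iff₀ (by positivity) hL]
    nlinarith [hL, h2L]
  have hsum := hlo.sum_range hg0 hdvg
  have hratio : Tendsto
      (fun n => (∑ k ∈ Finset.range n, (f k - g k)) / ∑ k ∈ Finset.range n, g k)
      atTop (𝓝 0) := hsum.tendsto_div_nhds_zero
  have hratio' : Tendsto
      (fun n : ℕ => (∑ k ∈ Finset.range (n+1), (f k - g k)) / ∑ k ∈ Finset.range (n+1), g k)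
      atTop (𝓝 0) := hratio.comp (tendsto_add_atTop_nat 1)
  have hSpos : ∀ n : ℕ, 2 ≤ n → 0 < ∑ k ∈ Finset.range (n+1), g k := by
    intro n hn
    have h2 : (2 : ℕ) ∈ Finset.range (n+1) := Finset.mem_range.2 (by omega)
    have hle : g 2 ≤ ∑ k ∈ Finset.range (n+1), g k :=
      Finset.single_le_sum (fun i _ => hg0 i) h2
    have hg2 : 0 < g 2 := by
      simp only [hgdef, if_pos (le_refl 2)]
      exact inv_pos.2 (Real.log_pos (by norm_num))
    linarith
  have hCS : Tendsto
      (fun n : ℕ => (∑ k ∈ Finset.Icc 1 n, a k) / ∑ k ∈ Finset.Icc 2 n, 1 / Real.log k)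
      atTop (𝓝 1) := by
    have h01 : Tendsto
        (fun n : ℕ => (∑ k ∈ Finset.range (n+1), (f k - g k)) / (∑ k ∈ Finset.range (n+1), g k) + 1)
        atTop (𝓝 (0 + 1)) := hratio'.add tendsto_const_nhds
    rw [zero_add] at h01
    refine Filter.Tendsto.congr' ?_ h01
    filter_upwards [eventually_ge_atTop 2] with n hn
    rw [hCf n, hSg n, Finset.sum_sub_distrib, sub_div, div_self (hSpos n hn).ne']
    ring
  have hSP : Tendsto
      (fun n : ℕ => (∑ k ∈ Finset.Icc 2 n, 1 / Real.log k) / (Nat.primeCounting n : ℝ))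
      atTop (𝓝 1) := by
    have h := hPNT.inv₀ one_ne_zero
    simp only [inv_div, inv_one] at h
    exact h
  have hfin := hCS.mul hSP
  rw [one_mul] at hfin
  refine Filter.Tendsto.congr' ?_ hfin
  filter_upwards [eventually_ge_atTop 2] with n hn
  have hS := hSpos n hn
  rw [← hSg n] at hS
  rw [div_mul_div_comm, mul_comm (∑ k ∈ Finset.Icc 1 n, a k), mul_div_mul_left _ _ hS.ne']
end

section
/- Assuming Panaitopol's inequalities, the limit as n → ∞ of 1/a_n - n/π(n) equals γ + S + 1, where γ is the Euler–Mascheroni constant and S = ∑_{k=2}^{∞} a_{k-1}/(k(k - a_{k-1})). -/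
open Filter Topology Finset Real

theorem stmt14 (a : ℕ → ℝ) (ha1 : a 1 = 1)
    (harec : ∀ n, 2 ≤ n → a n = a (n - 1) * (1 - a (n - 1) / n))
    (hPan₁ : ∀ n : ℕ, 59 ≤ n →
      (n : ℝ) / (Real.log n - 1 + 1 / Real.sqrt (Real.log n)) < (Nat.primeCounting n : ℝ))
    (hPan₂ : ∀ n : ℕ, 6 ≤ n →
      (Nat.primeCounting n : ℝ) < (n : ℝ) / (Real.log n - 1 - 1 / Real.sqrt (Real.log n)))
    (hb : Filter.Tendsto (fun n : ℕ => 1 / a n - Real.log n) Filter.atTop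
      (𝓝 (Real.eulerMascheroniConstant +
        ∑' k : ℕ, a (k + 1) / ((k + 2 : ℝ) * ((k + 2 : ℝ) - a (k + 1)))))) :
    Filter.Tendsto (fun n : ℕ => 1 / a n - (n : ℝ) / (Nat.primeCounting n : ℝ))
      Filter.atTop (𝓝 (Real.eulerMascheroniConstant +
        (∑' k : ℕ, a (k + 1) / ((k + 2 : ℝ) * ((k + 2 : ℝ) - a (k + 1)))) + 1)) := by
  -- 1/√(log n) → 0
  have hlogTop : Tendsto (fun n : ℕ => Real.log n) atTop atTop :=
    Real.tendsto_log_atTop.comp tendsto_natCast_atTop_atTop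
  have hsqrtTop : Tendsto (fun n : ℕ => Real.sqrt (Real.log n)) atTop atTop := by
    have := (tendsto_rpow_atTop (by norm_num : (0:ℝ) < 1/2)).comp hlogTop
    simpa [Function.comp_def, Real.sqrt_eq_rpow] using this
  have h0 : Tendsto (fun n : ℕ => 1 / Real.sqrt (Real.log n)) atTop (𝓝 0) := by
    simpa [one_div, Pi.inv_def] using hsqrtTop.inv_tendsto_atTop
  -- bounds on log n - n/π(n) for n ≥ 59
  have hbounds : ∀ n : ℕ, 59 ≤ n →
      1 - 1 / Real.sqrt (Real.log n) ≤ Real.log n - (n : ℝ) / (Nat.primeCounting n : ℝ) ∧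
      Real.log n - (n : ℝ) / (Nat.primeCounting n : ℝ) ≤ 1 + 1 / Real.sqrt (Real.log n) := by
    intro n hn
    have hn59 : (59 : ℝ) ≤ (n : ℝ) := by exact_mod_cast hn
    have hnpos : (0 : ℝ) < n := by linarith
    set L := Real.log n with hL
    have hL3 : 3 ≤ L := by
      have h59 : (3 : ℝ) ≤ Real.log 59 := by
        rw [Real.le_log_iff_exp_le (by norm_num)]
        have h1 : Real.exp 3 = Real.exp 1 ^ 3 := by
          rw [← Real.exp_nat_mul]; norm_num
        have h2 : Real.exp 1 ^ 3 < 2.7182818286 ^ 3 := by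
          gcongr <;> first | exact (Real.exp_pos 1).le | exact Real.exp_one_lt_d9
        nlinarith [Real.exp_pos (3:ℝ)]
      calc (3:ℝ) ≤ Real.log 59 := h59
        _ ≤ L := Real.log_le_log (by norm_num) hn59
    have hsq1 : 1 ≤ Real.sqrt L := by
      rw [show (1:ℝ) = Real.sqrt 1 by simp]
      exact Real.sqrt_le_sqrt (by linarith)
    have hsqpos : 0 < Real.sqrt L := by linarith
    have hinv1 : 1 / Real.sqrt L ≤ 1 := by
      rw [div_le_one hsqpos]; exact hsq1
    have hinvpos : 0 < 1 / Real.sqrt L := by positivity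
    have hD1 : 0 < L - 1 + 1 / Real.sqrt L := by linarith
    have hD2 : 0 < L - 1 - 1 / Real.sqrt L := by linarith
    have h1 := hPan₁ n hn
    have h2 := hPan₂ n (by omega)
    rw [← hL] at h1 h2
    have hpipos : (0 : ℝ) < (Nat.primeCounting n : ℝ) :=
      lt_trans (by positivity) h1
    constructor
    · -- n/π < L - 1 + 1/√L
      have : (n : ℝ) / (Nat.primeCounting n : ℝ) < L - 1 + 1 / Real.sqrt L := by
        rw [div_lt_iff₀ hpipos]
        have := (div_lt_iff₀ hD1).mp h1
        linarith [this]
      linarith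
    · -- L - 1 - 1/√L < n/π
      have : L - 1 - 1 / Real.sqrt L < (n : ℝ) / (Nat.primeCounting n : ℝ) := by
        rw [lt_div_iff₀ hpipos]
        have := (lt_div_iff₀ hD2).mp h2
        linarith [this]
      linarith
  have key : Tendsto (fun n : ℕ => Real.log n - (n : ℝ) / (Nat.primeCounting n : ℝ))
      atTop (𝓝 1) := by
    refine tendsto_of_tendsto_of_tendsto_of_le_of_le'
      (g := fun n : ℕ => 1 - 1 / Real.sqrt (Real.log n))
      (h := fun n : ℕ => 1 + 1 / Real.sqrt (Real.log n)) ?_ ?_ ?_ ?_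
    · exact (by simpa using (tendsto_const_nhds (x := (1:ℝ))).sub h0 :
        Tendsto (fun n : ℕ => 1 - 1 / Real.sqrt (Real.log n)) atTop (𝓝 1))
    · exact (by simpa using (tendsto_const_nhds (x := (1:ℝ))).add h0 :
        Tendsto (fun n : ℕ => 1 + 1 / Real.sqrt (Real.log n)) atTop (𝓝 1))
    · filter_upwards [eventually_ge_atTop 59] with n hn using (hbounds n hn).1
    · filter_upwards [eventually_ge_atTop 59] with n hn using (hbounds n hn).2
  have := hb.add key
  convert this using 2 with n
  ring
end

section
/- The sequence (a_n) converges to 0 as n → ∞. -/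
open Filter Topology Finset Real

theorem stmt18 (a : ℕ → ℝ) (ha1 : a 1 = 1)
    (harec : ∀ n, 2 ≤ n → a n = a (n - 1) * (1 - a (n - 1) / n)) :
    Filter.Tendsto a Filter.atTop (𝓝 0) := by
  -- positivity and ≤ 1
  have hpos : ∀ n, 1 ≤ n → 0 < a n ∧ a n ≤ 1 := by
    intro n hn
    induction n with
    | zero => omega
    | succ m ih =>
      rcases Nat.lt_or_ge m 1 with hm | hm
      · interval_cases m
        simp [ha1]
      · obtain ⟨h1, h2⟩ := ih hm
        have hrec := harec (m + 1) (by omega)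
        simp only [Nat.add_sub_cancel] at hrec
        have hmc : (1 : ℝ) ≤ (m : ℝ) := by exact_mod_cast hm
        have hlt : a m / ((m : ℝ) + 1) < 1 := by
          rw [div_lt_one (by positivity)]
          nlinarith
        have hge : 0 ≤ a m / ((m : ℝ) + 1) := by positivity
        constructor
        · rw [hrec]; push_cast
          have : 0 < 1 - a m / ((m : ℝ) + 1) := by linarith
          positivity
        · rw [hrec]; push_cast
          nlinarith
  -- harmonic lower bound on 1/a n
  have hharm : ∀ n, 1 ≤ n → (harmonic n : ℝ) ≤ (a n)⁻¹ := by
    intro n hn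
    induction n with
    | zero => omega
    | succ m ih =>
      rcases Nat.lt_or_ge m 1 with hm | hm
      · interval_cases m
        simp [ha1, harmonic]
      · have ihm := ih hm
        obtain ⟨h1, h2⟩ := hpos m hm
        have hrec := harec (m + 1) (by omega)
        simp only [Nat.add_sub_cancel] at hrec
        have hlt : a m / ((m : ℝ) + 1) < 1 := by
          rw [div_lt_one (by positivity)]
          nlinarith [show (1:ℝ) ≤ (m:ℝ) from by exact_mod_cast hm, (hpos m hm).2, (hpos m hm).1]
        have hfac : 0 < 1 - a m / ((m : ℝ) + 1) := by linarith
        have hposm1 : (0:ℝ) < a (m+1) := (hpos (m+1) (by omega)).1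
        rw [harmonic_succ]
        push_cast
        have key : (a m)⁻¹ + ((m : ℝ) + 1)⁻¹ ≤ (a (m+1))⁻¹ := by
          rw [hrec]
          push_cast
          rw [mul_inv]
          have h1' : (a m)⁻¹ + ((m:ℝ)+1)⁻¹ = (a m)⁻¹ * (1 + a m / ((m:ℝ)+1)) := by
            field_simp
          rw [h1']
          apply mul_le_mul_of_nonneg_left _ (by positivity)
          rw [inv_eq_one_div, le_div_iff₀ hfac]
          nlinarith [sq_nonneg (a m / ((m:ℝ)+1))]
        linarith
  -- harmonic → ∞ hence (harmonic n)⁻¹ → 0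
  have hH : Tendsto (fun n : ℕ => ((harmonic n : ℝ))⁻¹) atTop (𝓝 0) := by
    apply Filter.Tendsto.comp tendsto_inv_atTop_zero
    apply tendsto_atTop_mono (fun n => log_add_one_le_harmonic n)
    have : Tendsto (fun n : ℕ => ((n : ℝ) + 1)) atTop atTop :=
      tendsto_atTop_add_const_right _ 1 tendsto_natCast_atTop_atTop
    exact (Real.tendsto_log_atTop.comp this).congr (by simp)
  -- squeeze
  apply tendsto_of_tendsto_of_tendsto_of_le_of_le' tendsto_const_nhds hH
  · filter_upwards [eventually_ge_atTop 1] with n hn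
    exact (hpos n hn).1.le
  · filter_upwards [eventually_ge_atTop 1] with n hn
    have h1 := hharm n hn
    have h2 := (hpos n hn).1
    have h3 : (0:ℝ) < harmonic n := by
      exact_mod_cast harmonic_pos (by omega)
    calc a n = ((a n)⁻¹)⁻¹ := by rw [inv_inv]
      _ ≤ ((harmonic n : ℝ))⁻¹ := by
          apply inv_anti₀ h3 h1
end
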